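/- Let f(x) = f₁x₁+⋯+fₙxₙ and g(x) = g₁x₁+⋯+gₙxₙ be linear functions with integer coefficients, b a positive integer, and suppose 0 ≤ f_i < b for all i ∈ [n]. Then the set {x ∈ ℕⁿ : 0 ≤ g(x) < b} is the disjoint union of ⋃_{i≥1} (F_i⁻ ∩ D_{i−1}⁺ ∩ G_0⁺) ∩ ℕⁿ and ⋃_{i∈ℕ} (F_i⁺ ∩ D_i⁻ ∩ G_b⁻) ∩ ℕⁿ; in particular these two unions are disjoint and ℕⁿ ∩ G_0⁺ ∩ G_b⁻ = ⋃_{i≥1} (F_i⁻ ∩ D_{i−1}⁺ ∩ G_0⁺) ∪ ⋃_{i∈ℕ} (F_i⁺ ∩ D_i⁻ ∩ G_b⁻) intersected with ℕⁿ. -/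
import Mathlib


/-- With `f(x) = Σ fᵢxᵢ`, `g(x) = Σ gᵢxᵢ`, `b > 0` and `0 ≤ fᵢ < b` for all `i`, the set
`{x ∈ ℕⁿ : 0 ≤ g(x) < b}` is the disjoint union of
`⋃_{i≥1} (Fᵢ⁻ ∩ D_{i−1}⁺ ∩ G₀⁺) ∩ ℕⁿ` and `⋃_{i∈ℕ} (Fᵢ⁺ ∩ Dᵢ⁻ ∩ G_b⁻) ∩ ℕⁿ`. -/
theorem stmt11 (n : ℕ) (f g : Fin n → ℤ) (b : ℤ) (hb : 0 < b)
    (hf : ∀ i, 0 ≤ f i ∧ f i < b) :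
    ({x : Fin n → ℕ | 0 ≤ ∑ l, g l * (x l : ℤ) ∧ ∑ l, g l * (x l : ℤ) < b} =
      {x : Fin n → ℕ | ∃ i : ℕ, 1 ≤ i ∧ (∑ l, f l * (x l : ℤ)) < (i : ℤ) * b ∧
          ((i : ℤ) - 1) * b < (∑ l, f l * (x l : ℤ)) - ∑ l, g l * (x l : ℤ) ∧
          0 ≤ ∑ l, g l * (x l : ℤ)} ∪
      {x : Fin n → ℕ | ∃ i : ℕ, (i : ℤ) * b ≤ (∑ l, f l * (x l : ℤ)) ∧
          (∑ l, f l * (x l : ℤ)) - ∑ l, g l * (x l : ℤ) ≤ (i : ℤ) * b ∧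
          ∑ l, g l * (x l : ℤ) < b}) ∧
    ({x : Fin n → ℕ | ∃ i : ℕ, 1 ≤ i ∧ (∑ l, f l * (x l : ℤ)) < (i : ℤ) * b ∧
          ((i : ℤ) - 1) * b < (∑ l, f l * (x l : ℤ)) - ∑ l, g l * (x l : ℤ) ∧
          0 ≤ ∑ l, g l * (x l : ℤ)} ∩
      {x : Fin n → ℕ | ∃ i : ℕ, (i : ℤ) * b ≤ (∑ l, f l * (x l : ℤ)) ∧
          (∑ l, f l * (x l : ℤ)) - ∑ l, g l * (x l : ℤ) ≤ (i : ℤ) * b ∧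
          ∑ l, g l * (x l : ℤ) < b} = ∅) := by
  constructor
  · ext x
    simp only [Set.mem_setOf_eq, Set.mem_union]
    set F := ∑ l, f l * (x l : ℤ) with hFdef
    set G := ∑ l, g l * (x l : ℤ) with hGdef
    have hF0 : 0 ≤ F := Finset.sum_nonneg fun l _ =>
      mul_nonneg (hf l).1 (by positivity)
    constructor
    · rintro ⟨hG0, hGb⟩
      set q := F / b with hq
      have hq0 : 0 ≤ q := Int.ediv_nonneg hF0 hb.le
      have hdm := Int.mul_ediv_add_emod F b
      have hr0 : 0 ≤ F % b := Int.emod_nonneg F hb.ne'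
      have hrb : F % b < b := Int.emod_lt_of_pos F hb
      have h1 : q * b ≤ F := by nlinarith [hdm]
      have h2 : F < (q + 1) * b := by nlinarith [hdm]
      rcases le_or_gt (F - G) (q * b) with h | h
      · right
        refine ⟨q.toNat, ?_, ?_, hGb⟩ <;>
          rw [Int.toNat_of_nonneg hq0] <;> linarith
      · left
        refine ⟨q.toNat + 1, le_add_self, ?_, ?_, hG0⟩ <;>
          push_cast <;> rw [Int.toNat_of_nonneg hq0]
        · linarith
        · have : ((q : ℤ) + 1 - 1) * b = q * b := by ring
          linarith [this]
    · rintro (⟨i, hi1, hi2, hi3, hi4⟩ | ⟨i, hi1, hi2, hi3⟩)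
      · have : ((i : ℤ) - 1) * b = (i : ℤ) * b - b := by ring
        exact ⟨hi4, by linarith⟩
      · exact ⟨by linarith, hi3⟩
  · rw [Set.eq_empty_iff_forall_notMem]
    rintro x ⟨⟨i, hi1, hi2, hi3, hi4⟩, ⟨j, hj1, hj2, hj3⟩⟩
    have hji : (j : ℤ) < i := lt_of_mul_lt_mul_right (by linarith) hb.le
    have hji' : (j : ℤ) ≤ (i : ℤ) - 1 := by omega
    have : (j : ℤ) * b ≤ ((i : ℤ) - 1) * b :=
      mul_le_mul_of_nonneg_right hji' hb.le
    linarith
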